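/- Double robustness of the augmented inverse-probability-weighted functional for δ_e: fix e ∈ {0,1} and let q : 𝒳 → (0,1) be a working probability of {E=e} given X and â : 𝒳 → ℝ a working outcome regression. If q(x) = P(E=e|X=x) for all x with P(X=x) > 0, or â(x) = E(Y|E=e,X=x) for all x with P(X=x) > 0, then E[ (1{E=e}/q(X))·(Y − â(X)) + â(X) ] = δ_e := Σ_{x, P(X=x)>0} E(Y|E=e,X=x)·P(X=x). -/

import Mathlib

open MeasureTheory ProbabilityTheory

/-- Conditional probability of `B` given the event `A`: `P(B ∩ A) / P(A)`. -/
noncomputable def cP {Ω : Type*} [MeasurableSpace Ω] (μ : Measure Ω) (B A : Set Ω) : ℝ :=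
  (μ (B ∩ A)).toReal / (μ A).toReal

/-- Conditional expectation of `Y` given the event `A`: `E[Y·1_A] / P(A)`. -/
noncomputable def cE {Ω : Type*} [MeasurableSpace Ω] (μ : Measure Ω) (Y : Ω → ℝ) (A : Set Ω) : ℝ :=
  (∫ ω in A, Y ω ∂μ) / (μ A).toReal

open Classical in
/-- double robustness of the augmented inverse-probability-weighted
functional for `δ_e`: if the working propensity `q` or the working outcome regression
`â` is correct, then `E[(1{E=e}/q(X))·(Y − â(X)) + â(X)] = δ_e`. -/
theorem aipw_double_robustness
    {Ω 𝒳 : Type*} [MeasurableSpace Ω] [Fintype 𝒳]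
    [MeasurableSpace 𝒳] [MeasurableSingletonClass 𝒳]
    (μ : Measure Ω) [IsProbabilityMeasure μ]
    (X : Ω → 𝒳) (E : Ω → Bool) (Y : Ω → ℝ)
    (hX : Measurable X) (hE : Measurable E) (hY : Integrable Y μ)
    (hposE : ∀ (e : Bool) (x : 𝒳), μ (X ⁻¹' {x}) ≠ 0 → μ (E ⁻¹' {e} ∩ X ⁻¹' {x}) ≠ 0)
    (e : Bool)
    -- working models
    (q : 𝒳 → ℝ) (ahat : 𝒳 → ℝ)
    (hq01 : ∀ x, q x ∈ Set.Ioo (0:ℝ) 1)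
    -- at least one working model is correct
    (hdr : (∀ x : 𝒳, μ (X ⁻¹' {x}) ≠ 0 → q x = cP μ (E ⁻¹' {e}) (X ⁻¹' {x})) ∨
      (∀ x : 𝒳, μ (X ⁻¹' {x}) ≠ 0 → ahat x = cE μ Y (E ⁻¹' {e} ∩ X ⁻¹' {x}))) :
    ∫ ω, ((if E ω = e then (1:ℝ) else 0) / q (X ω) * (Y ω - ahat (X ω)) + ahat (X ω)) ∂μ =
      ∑ x ∈ Finset.univ.filter (fun x => μ (X ⁻¹' {x}) ≠ 0),
        cE μ Y (E ⁻¹' {e} ∩ X ⁻¹' {x}) * (μ (X ⁻¹' {x})).toReal := by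
  classical
  set ind : Ω → ℝ := fun ω => if E ω = e then (1:ℝ) else 0 with hind_def
  have hEset : MeasurableSet (E ⁻¹' {e}) := hE (measurableSet_singleton e)
  have hind_meas : Measurable ind := by
    have : ind = (E ⁻¹' {e}).indicator (fun _ => (1:ℝ)) := by
      funext ω; simp [ind, Set.indicator, Set.mem_preimage]
    rw [this]; exact measurable_const.indicator hEset
  have hqX_meas : Measurable (fun ω => (q (X ω))⁻¹) :=
    (measurable_of_countable fun x => (q x)⁻¹).comp hX
  have haX_meas : Measurable (fun ω => ahat (X ω)) :=
    (measurable_of_countable ahat).comp hX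
  -- integrability of bounded measurable functions
  have hint_of_bdd : ∀ (f : Ω → ℝ), Measurable f → ∀ C : ℝ, (∀ ω, ‖f ω‖ ≤ C) →
      Integrable f μ := fun f hf C hC =>
    (memLp_top_of_bound hf.aestronglyMeasurable C (Filter.Eventually.of_forall hC)).integrable
      le_top
  -- nonempty 𝒳
  have hΩne : Nonempty Ω := by
    by_contra h
    rw [not_nonempty_iff] at h
    have h1 : μ Set.univ = 1 := measure_univ
    rw [Set.univ_eq_empty_iff.mpr h, measure_empty] at h1
    exact zero_ne_one h1
  have h𝒳ne : Nonempty 𝒳 := ⟨X hΩne.some⟩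
  -- bound on the weight
  set g : Ω → ℝ := fun ω => ind ω / q (X ω) with hg_def
  have hg_meas : Measurable g := by
    have : g = fun ω => ind ω * (q (X ω))⁻¹ := by funext ω; simp [g, div_eq_mul_inv]
    rw [this]; exact hind_meas.mul hqX_meas
  obtain ⟨Cq, hCq⟩ : ∃ C : ℝ, ∀ ω, ‖g ω‖ ≤ C := by
    refine ⟨Finset.univ.sup' Finset.univ_nonempty (fun x => (q x)⁻¹), fun ω => ?_⟩
    have hq := hq01 (X ω)
    have h1 : ‖g ω‖ ≤ (q (X ω))⁻¹ := by
      rw [Real.norm_eq_abs, hg_def]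
      simp only
      rw [abs_div, abs_of_pos hq.1]
      rcases eq_or_ne (E ω) e with h | h <;>
        simp [ind, h, div_eq_mul_inv, inv_nonneg, le_of_lt hq.1]
    exact h1.trans (Finset.le_sup' (fun x => (q x)⁻¹) (Finset.mem_univ (X ω)))
  obtain ⟨Ca, hCa⟩ : ∃ C : ℝ, ∀ ω, ‖ahat (X ω)‖ ≤ C := by
    refine ⟨Finset.univ.sup' Finset.univ_nonempty (fun x => ‖ahat x‖), fun ω => ?_⟩
    exact Finset.le_sup' (fun x => ‖ahat x‖) (Finset.mem_univ (X ω))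
  -- integrability of the integrand
  have hgY : Integrable (fun ω => g ω * Y ω) μ :=
    hY.bdd_mul hg_meas.aestronglyMeasurable (Filter.Eventually.of_forall hCq)
  have hga : Integrable (fun ω => g ω * ahat (X ω)) μ := by
    refine hint_of_bdd _ (hg_meas.mul haX_meas) (Cq * Ca) fun ω => ?_
    rw [norm_mul]
    exact mul_le_mul (hCq ω) (hCa ω) (norm_nonneg _) ((norm_nonneg _).trans (hCq ω))
  have ha : Integrable (fun ω => ahat (X ω)) μ := hint_of_bdd _ haX_meas Ca hCa
  have hInt : Integrable (fun ω => ind ω / q (X ω) * (Y ω - ahat (X ω)) + ahat (X ω)) μ := by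
    have := (hgY.sub hga).add ha
    refine this.congr (Filter.Eventually.of_forall fun ω => ?_)
    simp only [Pi.add_apply, Pi.sub_apply, g, div_eq_mul_inv]
    ring
  -- split the integral over the fibers of X
  have hAx : ∀ x : 𝒳, MeasurableSet (X ⁻¹' {x}) := fun x => hX (measurableSet_singleton x)
  have hsplit : ∫ ω, (ind ω / q (X ω) * (Y ω - ahat (X ω)) + ahat (X ω)) ∂μ =
      ∑ x : 𝒳, ∫ ω in X ⁻¹' {x}, (ind ω / q (X ω) * (Y ω - ahat (X ω)) + ahat (X ω)) ∂μ := by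
    rw [← integral_iUnion_fintype hAx ?_ (fun x => hInt.integrableOn)]
    · rw [Set.iUnion_eq_univ_iff.mpr (fun ω => ⟨X ω, rfl⟩)]
      simp [Measure.restrict_univ]
    · intro i j hij
      simp only [Function.onFun, Set.disjoint_left]
      rintro ω hi hj
      exact hij (by rw [← hi, ← hj])
  rw [hsplit]
  -- drop the null fibers
  rw [← Finset.sum_filter_of_ne (p := fun x => μ (X ⁻¹' {x}) ≠ 0) ?_]
  swap
  · intro x _ hne hx0
    exact hne (by rw [Measure.restrict_eq_zero.mpr hx0, integral_zero_measure])
  refine Finset.sum_congr rfl fun x hx => ?_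
  rw [Finset.mem_filter] at hx
  have hx0 : μ (X ⁻¹' {x}) ≠ 0 := hx.2
  have hpe0 : μ (E ⁻¹' {e} ∩ X ⁻¹' {x}) ≠ 0 := hposE e x hx0
  set p : ℝ := (μ (X ⁻¹' {x})).toReal with hp_def
  set pe : ℝ := (μ (E ⁻¹' {e} ∩ X ⁻¹' {x})).toReal with hpe_def
  have hpne : p ≠ 0 := by
    simp [hp_def, ENNReal.toReal_ne_zero, hx0, measure_ne_top]
  have hpene : pe ≠ 0 := by
    simp [hpe_def, ENNReal.toReal_ne_zero, hpe0, measure_ne_top]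
  set I : ℝ := ∫ ω in E ⁻¹' {e} ∩ X ⁻¹' {x}, Y ω ∂μ with hI_def
  -- replace X ω by x inside the fiber
  have hcongr : ∫ ω in X ⁻¹' {x}, (ind ω / q (X ω) * (Y ω - ahat (X ω)) + ahat (X ω)) ∂μ =
      ∫ ω in X ⁻¹' {x}, (ind ω / q x * (Y ω - ahat x) + ahat x) ∂μ := by
    refine setIntegral_congr_fun (hAx x) fun ω hω => ?_
    have : X ω = x := hω
    rw [this]
  rw [hcongr]
  -- compute pieces
  have hindY : ∀ a : ℝ, (∫ ω in X ⁻¹' {x}, ind ω * (Y ω - a) ∂μ) = I - a * pe := by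
    intro a
    have h1 : (fun ω => ind ω * (Y ω - a)) = (E ⁻¹' {e}).indicator (fun ω => Y ω - a) := by
      funext ω
      simp [ind, Set.indicator, Set.mem_preimage]
    rw [h1, setIntegral_indicator hEset, Set.inter_comm]
    rw [integral_sub (hY.integrableOn) (integrableOn_const)]
    rw [setIntegral_const]
    simp [hI_def, hpe_def, smul_eq_mul, mul_comm, measureReal_def]
  have hsum : ∫ ω in X ⁻¹' {x}, (ind ω / q x * (Y ω - ahat x) + ahat x) ∂μ
      = (I - ahat x * pe) / q x + ahat x * p := by
    have hIY : IntegrableOn (fun ω => ind ω * (Y ω - ahat x)) (X ⁻¹' {x}) μ := by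
      have h1 : (fun ω => ind ω * (Y ω - ahat x)) = (E ⁻¹' {e}).indicator (fun ω => Y ω - ahat x) := by
        funext ω
        simp [ind, Set.indicator, Set.mem_preimage]
      rw [h1]
      exact ((hY.integrableOn.sub (integrableOn_const)).indicator hEset)
    have h2 : (fun ω => ind ω / q x * (Y ω - ahat x) + ahat x)
        = fun ω => (ind ω * (Y ω - ahat x)) * (q x)⁻¹ + ahat x := by
      funext ω; ring
    rw [h2, integral_add (hIY.mul_const _) (integrableOn_const)]
    rw [integral_mul_const, hindY, setIntegral_const]
    simp [div_eq_mul_inv, smul_eq_mul, mul_comm, measureReal_def, hp_def]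
  rw [hsum]
  -- final algebra, case split on which model is correct
  have hcE : cE μ Y (E ⁻¹' {e} ∩ X ⁻¹' {x}) = I / pe := rfl
  rw [hcE]
  rcases hdr with hq | ha'
  · have hqx : q x = pe / p := by
      rw [hq x hx0]; rfl
    rw [hqx]
    field_simp
    ring
  · have hax : ahat x = I / pe := by
      rw [ha' x hx0]; rfl
    rw [hax]
    have : I - I / pe * pe = 0 := by field_simp; ring
    rw [this]
    simp
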